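/- Let k_σ(x, x') = ψ((g(x) - g(x'))/σ) where g : X → ℝ^d is injective on the finite set {x_1,...,x_N}, ψ : ℝ^d → [0,1] satisfies ψ(0) = 1 and lim_{a→∞} ψ(a·t) = 0 for every unit vector t. Then for any nonempty finite subset S of {x_1,...,x_N}, the uncertainty coverage UC_σ(S) = (1/N) ∑_n U(x_n) · max_{x'∈S} k_σ(x_n, x') converges, as σ → 0⁺, to (1/N) ∑_{x ∈ S} U(x). -/

import Mathlib

noncomputable def maxOr0 {X : Type*} (S : Finset X) (f : X → ℝ) : ℝ :=
  WithBot.unbotD 0 (S.sup fun x => ((f x : ℝ) : WithBot ℝ))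

lemma maxOr0_eq_sup' {X : Type*} (S : Finset X) (h : S.Nonempty) (f : X → ℝ) :
    maxOr0 S f = S.sup' h f := by
  have h1 : (S.sup fun x => ((f x : ℝ) : WithBot ℝ)) = ((S.sup' h f : ℝ) : WithBot ℝ) :=
    (Finset.coe_sup' h f).symm
  rw [maxOr0, h1, WithBot.unbotD_coe]

lemma psi_term_tendsto {d : ℕ}
    (ψ : EuclideanSpace ℝ (Fin d) → ℝ)
    (hψlim : ∀ t : EuclideanSpace ℝ (Fin d), ‖t‖ = 1 →
      Filter.Tendsto (fun a : ℝ => ψ (a • t)) Filter.atTop (nhds 0))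
    (v : EuclideanSpace ℝ (Fin d)) (hv : v ≠ 0) :
    Filter.Tendsto (fun σ : ℝ => ψ (σ⁻¹ • v)) (nhdsWithin 0 (Set.Ioi 0)) (nhds 0) := by
  have hnv : (0 : ℝ) < ‖v‖ := norm_pos_iff.mpr hv
  have ht : ‖(‖v‖⁻¹ • v : EuclideanSpace ℝ (Fin d))‖ = 1 := norm_smul_inv_norm hv
  have h1 := hψlim (‖v‖⁻¹ • v) ht
  have h2 : Filter.Tendsto (fun σ : ℝ => σ⁻¹ * ‖v‖) (nhdsWithin 0 (Set.Ioi 0))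
      Filter.atTop := Filter.Tendsto.atTop_mul_const hnv tendsto_inv_nhdsGT_zero
  have h3 := h1.comp h2
  convert h3 using 2 with σ
  simp only [Function.comp]
  rw [smul_smul, mul_assoc, mul_inv_cancel₀ (ne_of_gt hnv), mul_one]

theorem uc_tendsto_sum_uncertainty {X : Type*} [DecidableEq X] {d N : ℕ}
    (x : Fin N → X) (hx : Function.Injective x)
    (g : X → EuclideanSpace ℝ (Fin d)) (hg : Set.InjOn g (Set.range x))
    (U : X → ℝ) (hU : ∀ a, 0 ≤ U a)
    (ψ : EuclideanSpace ℝ (Fin d) → ℝ)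
    (hψ01 : ∀ v, ψ v ∈ Set.Icc (0 : ℝ) 1)
    (hψ0 : ψ 0 = 1)
    (hψlim : ∀ t : EuclideanSpace ℝ (Fin d), ‖t‖ = 1 →
      Filter.Tendsto (fun a : ℝ => ψ (a • t)) Filter.atTop (nhds 0))
    (S : Finset X) (hSne : S.Nonempty) (hS : S ⊆ Finset.image x Finset.univ) :
    Filter.Tendsto
      (fun σ : ℝ => (1 / (N : ℝ)) * ∑ n : Fin N,
        U (x n) * maxOr0 S (fun x' => ψ (σ⁻¹ • (g (x n) - g x'))))
      (nhdsWithin 0 (Set.Ioi 0))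
      (nhds ((1 / (N : ℝ)) * ∑ s ∈ S, U s)) := by
  have hkey : ∑ n : Fin N, U (x n) * (if x n ∈ S then (1 : ℝ) else 0)
      = ∑ s ∈ S, U s := by
    have h1 : ∑ n : Fin N, U (x n) * (if x n ∈ S then (1 : ℝ) else 0)
        = ∑ n ∈ Finset.univ.filter (fun n => x n ∈ S), U (x n) := by
      rw [Finset.sum_filter]
      exact Finset.sum_congr rfl fun n _ => by by_cases h : x n ∈ S <;> simp [h]
    rw [h1, ← Finset.sum_image (g := x) (f := U) (fun a _ b _ h => hx h)]
    congr 1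
    ext s
    simp only [Finset.mem_image, Finset.mem_filter, Finset.mem_univ, true_and]
    constructor
    · rintro ⟨n, hn, rfl⟩; exact hn
    · intro hs
      obtain ⟨n, _, rfl⟩ := Finset.mem_image.mp (hS hs)
      exact ⟨n, hs, rfl⟩
  rw [← hkey]
  apply Filter.Tendsto.const_mul
  apply tendsto_finset_sum
  intro n _
  apply Filter.Tendsto.const_mul
  by_cases hmem : x n ∈ S
  · simp only [hmem, if_true]
    have hconst : ∀ σ : ℝ, maxOr0 S (fun x' => ψ (σ⁻¹ • (g (x n) - g x'))) = 1 := by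
      intro σ
      rw [maxOr0_eq_sup' S hSne]
      apply le_antisymm
      · exact Finset.sup'_le _ _ fun x' _ => (hψ01 _).2
      · refine Finset.le_sup'_of_le _ hmem ?_
        simp [hψ0]
    simp only [hconst]
    exact tendsto_const_nhds
  · simp only [hmem, if_false]
    have hb0 : Filter.Tendsto (fun σ : ℝ => ∑ s ∈ S, ψ (σ⁻¹ • (g (x n) - g s)))
        (nhdsWithin 0 (Set.Ioi 0)) (nhds (∑ s ∈ S, (0 : ℝ))) := by
      apply tendsto_finset_sum
      intro s hs
      apply psi_term_tendsto ψ hψlim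
      have hxr : x n ∈ Set.range x := ⟨n, rfl⟩
      have hsr : s ∈ Set.range x := by
        obtain ⟨m, _, rfl⟩ := Finset.mem_image.mp (hS hs)
        exact ⟨m, rfl⟩
      intro h0
      have : g (x n) = g s := sub_eq_zero.mp h0
      exact hmem (hg hxr hsr this ▸ hs)
    have hb : Filter.Tendsto (fun σ : ℝ => ∑ s ∈ S, ψ (σ⁻¹ • (g (x n) - g s)))
        (nhdsWithin 0 (Set.Ioi 0)) (nhds 0) := by simpa using hb0
    refine tendsto_of_tendsto_of_tendsto_of_le_of_le tendsto_const_nhds hb ?_ ?_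
    · intro σ
      dsimp only
      rw [maxOr0_eq_sup' S hSne]
      obtain ⟨s0, hs0⟩ := hSne
      exact le_trans (hψ01 _).1 (Finset.le_sup' (f := fun x' => ψ (σ⁻¹ • (g (x n) - g x'))) hs0)
    · intro σ
      dsimp only
      rw [maxOr0_eq_sup' S hSne]
      apply Finset.sup'_le
      intro s hs
      exact Finset.single_le_sum (f := fun s => ψ (σ⁻¹ • (g (x n) - g s))) (fun a _ => (hψ01 _).1) hs
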